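/- arXiv:1106.4606 — 2 statements merged into one kernel-verified Lean document; each statement's English description precedes it below -/
import Mathlib

section
/- Let σ be a relational first-order language and let A and B be σ-structures on the same universe U. Define the product structure A·B on U by interpreting each relation symbol R as the intersection R^A ∩ R^B. Then for every quantifier-free Horn formula φ(x̄) over σ and every tuple ā from U, if A ⊨ φ(ā) and B ⊨ φ(ā), then A·B ⊨ φ(ā). -/
/-- A relational first-order signature: relation symbols with arities. -/
structure RelSig where
  symb : Type
  ar : symb → ℕ

/-- An atomic formula over a variable type `ν`. -/
structure Atom (σ : RelSig) (ν : Type) where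
  rel : σ.symb
  args : Fin (σ.ar rel) → ν

/-- An interpretation of the relation symbols of `σ` on a universe `U`. -/
def Interp (σ : RelSig) (U : Type) := ∀ r : σ.symb, (Fin (σ.ar r) → U) → Prop

/-- Satisfaction of an atom under a variable assignment. -/
def SatAtom {σ : RelSig} {U ν : Type} (I : Interp σ U) (a : ν → U)
    (A : Atom σ ν) : Prop :=
  I A.rel (fun i => a (A.args i))

/-- Satisfaction of a literal (atom together with a polarity). -/
def SatLit {σ : RelSig} {U ν : Type} (I : Interp σ U) (a : ν → U)
    (l : Atom σ ν × Bool) : Prop :=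
  if l.2 then SatAtom I a l.1 else ¬SatAtom I a l.1

/-- Satisfaction of a clause: some literal holds. -/
def SatFOClause {σ : RelSig} {U ν : Type} (I : Interp σ U) (a : ν → U)
    (C : List (Atom σ ν × Bool)) : Prop :=
  ∃ l ∈ C, SatLit I a l

/-- A first-order Horn clause: at most one positive atom. -/
def FOHornClause {σ : RelSig} {ν : Type} (C : List (Atom σ ν × Bool)) : Prop :=
  (C.filter (fun l => l.2)).length ≤ 1

/-- The product structure: each relation interpreted as the intersection. -/
def ProdInterp {σ : RelSig} {U : Type} (IA IB : Interp σ U) : Interp σ U :=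
  fun r t => IA r t ∧ IB r t

/-- Quantifier-free Horn formulas (conjunctions `φ` of Horn clauses) are
preserved by the intersection product of two structures on a common universe. -/
theorem qf_horn_preserved_under_product {σ : RelSig} {U ν : Type}
    (IA IB : Interp σ U) (φ : List (List (Atom σ ν × Bool)))
    (hφ : ∀ C ∈ φ, FOHornClause C) (a : ν → U)
    (hA : ∀ C ∈ φ, SatFOClause IA a C) (hB : ∀ C ∈ φ, SatFOClause IB a C) :
    ∀ C ∈ φ, SatFOClause (ProdInterp IA IB) a C := by
  intro C hC
  obtain ⟨lA, hlA, sA⟩ := hA C hC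
  obtain ⟨lB, hlB, sB⟩ := hB C hC
  rcases hb : lA.2 with _ | _
  · refine ⟨lA, hlA, ?_⟩
    simp only [SatLit, hb, if_false, Bool.false_eq_true] at sA ⊢
    exact fun h => sA h.1
  · rcases hb' : lB.2 with _ | _
    · refine ⟨lB, hlB, ?_⟩
      simp only [SatLit, hb', if_false, Bool.false_eq_true] at sB ⊢
      exact fun h => sB h.2
    · have heq : lA = lB := by
        have h1 : lA ∈ C.filter (fun l => l.2) := List.mem_filter.2 ⟨hlA, by simp [hb]⟩
        have h2 : lB ∈ C.filter (fun l => l.2) := List.mem_filter.2 ⟨hlB, by simp [hb']⟩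
        have := hφ C hC
        unfold FOHornClause at this
        rcases hF : C.filter (fun l => l.2) with _ | ⟨x, _ | ⟨y, t⟩⟩
        · rw [hF] at h1; simp at h1
        · rw [hF] at h1 h2
          rw [List.mem_singleton.1 h1, List.mem_singleton.1 h2]
        · rw [hF] at this; simp only [List.length_cons] at this; omega
      refine ⟨lA, hlA, ?_⟩
      simp only [SatLit, hb, if_true] at sA ⊢
      have sB' : SatAtom IB a lA.1 := by
        rw [heq]; simpa [SatLit, hb'] using sB
      exact ⟨sA, sB'⟩
end

section
/- There is no universal Horn sentence θ over the vocabulary {E, F} (two binary relation symbols) such that for all structures M on a common finite universe, M ⊨ θ characterizes 'F is a matching contained in E of size ≥ K' in a way preserved under intersection products; formally: if θ is any sentence preserved under intersection products of structures with common universe, then θ does not define the class of structures (V, E, F) where F is a matching of the graph (V,E) with |F| ≥ ⌊|V|/2⌋, for |V| ≥ 3 odd. -/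
/-- `F` is a matching contained in `E`: a symmetric irreflexive subrelation
of `E` in which every vertex has at most one partner. -/
def IsMatchingRel {V : Type*} (E F : V → V → Prop) : Prop :=
  (∀ x y, F x y → E x y) ∧ (∀ x y, F x y → F y x) ∧
  (∀ x, ¬F x x) ∧ (∀ x y z, F x y → F x z → y = z)

/-- The set of (undirected) edges of a binary relation. -/
def relEdges {V : Type*} (F : V → V → Prop) : Set (Sym2 V) :=
  {e | ∃ x y, e = s(x, y) ∧ F x y}

/-- No property of {E,F}-structures preserved under intersection products can
define "F is a matching contained in E of size ≥ ⌊|V|/2⌋" on finite odd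
universes of size ≥ 3. -/
theorem no_intersection_preserved_matching_definition
    (P : ∀ n : ℕ, (Fin n → Fin n → Prop) → (Fin n → Fin n → Prop) → Prop)
    (hpres : ∀ (n : ℕ) (E1 F1 E2 F2 : Fin n → Fin n → Prop),
      P n E1 F1 → P n E2 F2 →
      P n (fun x y => E1 x y ∧ E2 x y) (fun x y => F1 x y ∧ F2 x y)) :
    ¬ (∀ n : ℕ, 3 ≤ n → Odd n → ∀ E F : Fin n → Fin n → Prop,
        (P n E F ↔ (IsMatchingRel E F ∧ n / 2 ≤ (relEdges F).ncard))) := by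
  intro h
  have h3 := h 3 (by norm_num) ⟨1, rfl⟩
  set F1 : Fin 3 → Fin 3 → Prop := fun x y => (x = 0 ∧ y = 1) ∨ (x = 1 ∧ y = 0) with hF1
  set F2 : Fin 3 → Fin 3 → Prop := fun x y => (x = 1 ∧ y = 2) ∨ (x = 2 ∧ y = 1) with hF2
  set E : Fin 3 → Fin 3 → Prop := fun x y => F1 x y ∨ F2 x y with hE
  have hm1 : IsMatchingRel E F1 := by
    refine ⟨fun x y h => Or.inl h, ?_, ?_, ?_⟩ <;> · intro x; fin_cases x <;> simp [hF1, hE]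
  have hm2 : IsMatchingRel E F2 := by
    refine ⟨fun x y h => Or.inr h, ?_, ?_, ?_⟩ <;> · intro x; fin_cases x <;> simp [hF2, hE]
  have hc1 : (3 : ℕ) / 2 ≤ (relEdges F1).ncard := by
    have hmem : s((0 : Fin 3), 1) ∈ relEdges F1 := ⟨0, 1, rfl, Or.inl ⟨rfl, rfl⟩⟩
    have := Set.ncard_pos (s := relEdges F1) (Set.toFinite _)
    exact (this.mpr ⟨_, hmem⟩ : 1 ≤ _)
  have hc2 : (3 : ℕ) / 2 ≤ (relEdges F2).ncard := by
    have hmem : s((1 : Fin 3), 2) ∈ relEdges F2 := ⟨1, 2, rfl, Or.inl ⟨rfl, rfl⟩⟩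
    have := Set.ncard_pos (s := relEdges F2) (Set.toFinite _)
    exact (this.mpr ⟨_, hmem⟩ : 1 ≤ _)
  have hP1 : P 3 E F1 := (h3 E F1).mpr ⟨hm1, hc1⟩
  have hP2 : P 3 E F2 := (h3 E F2).mpr ⟨hm2, hc2⟩
  have hP := hpres 3 E F1 E F2 hP1 hP2
  have hfalse := ((h3 _ _).mp hP).2
  have hempty : relEdges (fun x y => F1 x y ∧ F2 x y) = (∅ : Set (Sym2 (Fin 3))) := by
    ext e
    simp only [relEdges, Set.mem_setOf_eq, Set.mem_empty_iff_false, iff_false]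
    rintro ⟨x, y, -, ⟨h1, h2⟩⟩
    rcases h1 with ⟨rfl, rfl⟩ | ⟨rfl, rfl⟩ <;> rcases h2 with ⟨h, h'⟩ | ⟨h, h'⟩ <;> simp_all
  rw [hempty] at hfalse
  simp at hfalse
end
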